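/- Let N ≥ 3 be an integer, a > 0, β = √(1 + 4a/(N−2)²), c = (N−2)(1−β)/2, α = −(N−2)(1+β)/2; assume ν := (N−2)β is an odd positive integer. Let R > 0, k₁ = ⌊(ν+2)/4⌋, and let c̃_j = ( ∏_{ℓ=1}^{k₁} (ν − 2ℓ − 2j + 2) ) / ( ∏_{1 ≤ ℓ ≤ k₁, ℓ ≠ j} (2ℓ − 2j) ) for 1 ≤ j ≤ k₁. Then for every g ∈ L²((R,∞), r^{N−1}dr) the integrals ∫_R^∞ g(r) r^{c+2i−1} dr (1 ≤ i ≤ k₁) converge absolutely, and the squared distance of g to the span of { r^{α+2j−2} : 1 ≤ j ≤ k₁ } in L²((R,∞), r^{N−1}dr) is given by: inf_{q ∈ ℝ^{k₁}} ∫_R^∞ | g(r) − Σ_{j=1}^{k₁} q_j r^{α+2j−2} |² r^{N−1}dr = ∫_R^∞ g(r)² r^{N−1}dr − Σ_{i,j=1}^{k₁} c̃_i c̃_j ( R^{ν−2i−2j+2} / (ν−2i−2j+2) ) ( ∫_R^∞ g(r) r^{c+2i−1} dr ) ( ∫_R^∞ g(r) r^{c+2j−1} dr ). -/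

import Mathlib

open Finset Polynomial

lemma dd_lemma {s : Finset ℕ} {v : ℕ → ℝ} (hvs : Set.InjOn v s) {p : ℝ[X]}
    (hdeg : p.degree < s.card) :
    ∑ i ∈ s, Polynomial.eval (v i) p * ∏ j ∈ s.erase i, (v i - v j)⁻¹
      = p.coeff (s.card - 1) := by
  conv_rhs => rw [Lagrange.eq_interpolate hvs hdeg]
  rw [Lagrange.interpolate_apply, Polynomial.finset_sum_coeff]
  refine Finset.sum_congr rfl fun i hi => ?_
  rw [Polynomial.coeff_C_mul]
  congr 1
  have hnd := Lagrange.natDegree_basis hvs hi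
  rw [← hnd, Polynomial.coeff_natDegree, Lagrange.basis, Polynomial.leadingCoeff_prod]
  refine Finset.prod_congr rfl fun j _ => ?_
  rw [Lagrange.basisDivisor, Polynomial.leadingCoeff_mul, Polynomial.leadingCoeff_C,
    Polynomial.leadingCoeff_X_sub_C, mul_one]

private lemma cancel_aux {x y P B : ℝ} (hx : x ≠ 0) (hy : y ≠ 0) :
    x * (y * P) / B * (x * y)⁻¹ = P * B⁻¹ := by
  rw [div_eq_mul_inv, mul_inv,
    show x * (y * P) * B⁻¹ * (x⁻¹ * y⁻¹) = (x * x⁻¹) * ((y * y⁻¹) * (P * B⁻¹)) from by ring,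
    mul_inv_cancel₀ hx, mul_inv_cancel₀ hy, one_mul, one_mul]

private lemma cancel_aux2 {x y P B : ℝ} (hx : x ≠ 0) :
    x * P / B * (x * y)⁻¹ = P * (y⁻¹ * B⁻¹) := by
  rw [div_eq_mul_inv, mul_inv,
    show x * P * B⁻¹ * (x⁻¹ * y⁻¹) = (x * x⁻¹) * (P * (y⁻¹ * B⁻¹)) from by ring,
    mul_inv_cancel₀ hx, one_mul]

lemma cauchy_sum (ν k₁ : ℕ) (hνodd : Odd ν) (ctil : ℕ → ℝ)
    (hctil : ∀ j : ℕ, ctil j =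
      (∏ ℓ ∈ Finset.Icc 1 k₁, ((ν : ℝ) - 2 * (ℓ : ℝ) - 2 * (j : ℝ) + 2)) /
        (∏ ℓ ∈ (Finset.Icc 1 k₁).erase j, (2 * (ℓ : ℝ) - 2 * (j : ℝ))))
    {i m : ℕ} (hi : i ∈ Finset.Icc 1 k₁) (hm : m ∈ Finset.Icc 1 k₁) :
    (∑ j ∈ Finset.Icc 1 k₁,
        ctil j * ((((ν:ℝ) + 2 - 2*(i:ℝ) - 2*(j:ℝ)) * ((ν:ℝ) + 2 - 2*(j:ℝ) - 2*(m:ℝ)))⁻¹)) * ctil m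
      = if i = m then 1 else 0 := by
  classical
  set s := Finset.Icc 1 k₁ with hs
  obtain ⟨w, hw⟩ := hνodd
  have hne' : ∀ x y : ℕ, ((ν:ℝ) - 2*(x:ℝ) - 2*(y:ℝ) + 2) ≠ 0 := by
    intro x y h
    have : (ν:ℤ) - 2*(x:ℤ) - 2*(y:ℤ) + 2 = 0 := by exact_mod_cast h
    omega
  have hne2 : ∀ x y : ℕ, ((ν:ℝ) + 2 - 2*(x:ℝ) - 2*(y:ℝ)) ≠ 0 := by
    intro x y h
    have : (ν:ℤ) + 2 - 2*(x:ℤ) - 2*(y:ℤ) = 0 := by exact_mod_cast h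
    omega
  have hsub : ∀ x y : ℕ, x ≠ y → (2*(x:ℝ) - 2*(y:ℝ)) ≠ 0 := by
    intro x y hxy h
    have : (x:ℝ) = y := by linarith
    exact hxy (by exact_mod_cast this)
  have hBne : ∀ j : ℕ, (∏ ℓ ∈ s.erase j, (2 * (ℓ:ℝ) - 2 * (j:ℝ))) ≠ 0 := by
    intro j
    exact Finset.prod_ne_zero_iff.2 fun ℓ hℓ => hsub ℓ j (Finset.mem_erase.1 hℓ).1
  have him1 : 1 ≤ i ∧ i ≤ k₁ := Finset.mem_Icc.1 hi
  have hmm1 : 1 ≤ m ∧ m ≤ k₁ := Finset.mem_Icc.1 hm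
  have h0s : (0:ℕ) ∉ s := by simp [hs]
  by_cases him : i = m
  · -- diagonal case
    subst him
    rw [if_pos rfl]
    set t := s.erase i with ht
    set p : ℝ[X] := ∏ ℓ ∈ t, (X + C ((ν:ℝ) - 2*(ℓ:ℝ) + 2)) with hp
    have hpnd : p.natDegree = k₁ - 1 := by
      rw [hp, natDegree_prod_of_monic _ _ fun ℓ _ => monic_X_add_C _]
      simp only [Polynomial.natDegree_X_add_C, Finset.sum_const, smul_eq_mul, mul_one]
      rw [ht, Finset.card_erase_of_mem hi, hs, Nat.card_Icc]
      omega
    set v : ℕ → ℝ := fun n => if n = 0 then (2*(i:ℝ) - (ν:ℝ) - 2) else -2*(n:ℝ) with hv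
    have hval : ∀ n ∈ s, v n = -2*(n:ℝ) := by
      intro n hn
      have : n ≠ 0 := by have := (Finset.mem_Icc.1 hn).1; omega
      simp [hv, this]
    have hvs : Set.InjOn v (insert 0 s : Finset ℕ) := by
      intro x hx y hy hxy
      simp only [Finset.coe_insert, Set.mem_insert_iff, Finset.mem_coe] at hx hy
      rcases hx with rfl | hx <;> rcases hy with rfl | hy
      · rfl
      · exfalso
        rw [hval y hy] at hxy
        simp only [hv, if_pos rfl] at hxy
        have h1 : (ν:ℝ) + 2 = 2*(i:ℝ) + 2*(y:ℝ) := by linarith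
        have h2 : (ν:ℕ) + 2 = 2*i + 2*y := by exact_mod_cast h1
        omega
      · exfalso
        rw [hval x hx] at hxy
        simp only [hv, if_pos rfl] at hxy
        have h1 : (ν:ℝ) + 2 = 2*(i:ℝ) + 2*(x:ℝ) := by linarith
        have h2 : (ν:ℕ) + 2 = 2*i + 2*x := by exact_mod_cast h1
        omega
      · rw [hval x hx, hval y hy] at hxy
        have : (x:ℝ) = y := by linarith
        exact_mod_cast this
    have hcard : (insert 0 s : Finset ℕ).card = k₁ + 1 := by
      rw [Finset.card_insert_of_notMem h0s, hs, Nat.card_Icc]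
      omega
    have hdeg : p.degree < (((insert 0 s : Finset ℕ).card : ℕ) : WithBot ℕ) := by
      have h1 : p.natDegree < (insert 0 s : Finset ℕ).card := by
        rw [hpnd, hcard]; omega
      exact lt_of_le_of_lt p.degree_le_natDegree (by exact_mod_cast h1)
    have dd := dd_lemma hvs hdeg
    rw [hcard] at dd
    have hcoeff : p.coeff (k₁ + 1 - 1) = 0 := by
      refine Polynomial.coeff_eq_zero_of_natDegree_lt ?_
      rw [hpnd]; omega
    rw [Finset.sum_insert h0s, hcoeff] at dd
    -- per-term identification for j ∈ s
    have hterm : ∀ j ∈ s,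
        ctil j * ((((ν:ℝ) + 2 - 2*(i:ℝ) - 2*(j:ℝ)) * ((ν:ℝ) + 2 - 2*(j:ℝ) - 2*(i:ℝ)))⁻¹)
          = Polynomial.eval (v j) p * ∏ ℓ ∈ (insert 0 s).erase j, (v j - v ℓ)⁻¹ := by
      intro j hj
      have hj0 : j ≠ 0 := by have := (Finset.mem_Icc.1 hj).1; omega
      have h0ej : (0:ℕ) ∉ s.erase j := fun h => h0s (Finset.mem_of_mem_erase h)
      rw [Finset.erase_insert_of_ne hj0.symm, Finset.prod_insert h0ej]
      have hev : Polynomial.eval (v j) p = ∏ ℓ ∈ t, ((ν:ℝ) - 2*(ℓ:ℝ) - 2*(j:ℝ) + 2) := by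
        rw [hp, Polynomial.eval_prod]
        refine Finset.prod_congr rfl fun ℓ hℓ => ?_
        rw [hval j hj]; simp; ring
      have hprod : ∏ ℓ ∈ s.erase j, (v j - v ℓ)⁻¹
          = (∏ ℓ ∈ s.erase j, (2*(ℓ:ℝ) - 2*(j:ℝ)))⁻¹ := by
        rw [← Finset.prod_inv_distrib]
        refine Finset.prod_congr rfl fun ℓ hℓ => ?_
        rw [hval j hj, hval ℓ (Finset.mem_of_mem_erase hℓ)]
        congr 1; ring
      have hvj0 : v j - v 0 = (ν:ℝ) + 2 - 2*(j:ℝ) - 2*(i:ℝ) := by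
        rw [hval j hj]; simp [hv]; ring
      have hnum : (∏ ℓ ∈ s, ((ν : ℝ) - 2 * (ℓ : ℝ) - 2 * (j : ℝ) + 2))
          = ((ν:ℝ) - 2*(i:ℝ) - 2*(j:ℝ) + 2) * ∏ ℓ ∈ t, ((ν:ℝ) - 2*(ℓ:ℝ) - 2*(j:ℝ) + 2) := by
        rw [ht, ← Finset.mul_prod_erase s _ hi]
      rw [hctil j, hev, hprod, hvj0, hnum,
        show (ν:ℝ) + 2 - 2*(i:ℝ) - 2*(j:ℝ) = (ν:ℝ) - 2*(i:ℝ) - 2*(j:ℝ) + 2 from by ring]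
      exact cancel_aux2 (hne' i j)
    rw [Finset.sum_congr rfl hterm]
    -- now dd : term0 + Σ = 0
    have hsum : (∑ j ∈ s, Polynomial.eval (v j) p * ∏ ℓ ∈ (insert 0 s).erase j, (v j - v ℓ)⁻¹)
        = -(Polynomial.eval (v 0) p * ∏ ℓ ∈ (insert 0 s).erase 0, (v 0 - v ℓ)⁻¹) := by
      linarith
    rw [hsum, Finset.erase_insert h0s]
    -- compute term0
    have hev0 : Polynomial.eval (v 0) p = ∏ ℓ ∈ t, (2*(i:ℝ) - 2*(ℓ:ℝ)) := by
      rw [hp, Polynomial.eval_prod]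
      refine Finset.prod_congr rfl fun ℓ hℓ => ?_
      simp [hv]
      try ring
    have hprod0 : ∏ ℓ ∈ s, (v 0 - v ℓ)⁻¹ = ∏ ℓ ∈ s, (2*(i:ℝ) - (ν:ℝ) - 2 + 2*(ℓ:ℝ))⁻¹ := by
      refine Finset.prod_congr rfl fun ℓ hℓ => ?_
      rw [hval ℓ hℓ]
      simp [hv]
      try ring_nf
    rw [hev0, hprod0, hctil i, div_eq_mul_inv, ← ht,
      show (∏ ℓ ∈ t, (2 * (ℓ:ℝ) - 2 * (i:ℝ)))⁻¹ = ∏ ℓ ∈ t, (2 * (ℓ:ℝ) - 2 * (i:ℝ))⁻¹ from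
        (Finset.prod_inv_distrib _).symm,
      show -((∏ ℓ ∈ t, (2*(i:ℝ) - 2*(ℓ:ℝ))) * ∏ ℓ ∈ s, (2*(i:ℝ) - (ν:ℝ) - 2 + 2*(ℓ:ℝ))⁻¹) *
          ((∏ ℓ ∈ s, ((ν:ℝ) - 2*(ℓ:ℝ) - 2*(i:ℝ) + 2)) * ∏ ℓ ∈ t, (2 * (ℓ:ℝ) - 2 * (i:ℝ))⁻¹)
        = -(((∏ ℓ ∈ t, (2*(i:ℝ) - 2*(ℓ:ℝ))) * ∏ ℓ ∈ t, (2 * (ℓ:ℝ) - 2 * (i:ℝ))⁻¹) *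
            ((∏ ℓ ∈ s, (2*(i:ℝ) - (ν:ℝ) - 2 + 2*(ℓ:ℝ))⁻¹) *
              ∏ ℓ ∈ s, ((ν:ℝ) - 2*(ℓ:ℝ) - 2*(i:ℝ) + 2))) from by ring,
      ← Finset.prod_mul_distrib, ← Finset.prod_mul_distrib]
    have f1 : ∀ ℓ ∈ t, (2*(i:ℝ) - 2*(ℓ:ℝ)) * (2 * (ℓ:ℝ) - 2 * (i:ℝ))⁻¹ = -1 := by
      intro ℓ hℓ
      have hy := hsub ℓ i (Finset.mem_erase.1 hℓ).1
      rw [show (2*(i:ℝ) - 2*(ℓ:ℝ)) = -(2 * (ℓ:ℝ) - 2 * (i:ℝ)) from by ring, neg_mul,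
        mul_inv_cancel₀ hy]
    have f2 : ∀ ℓ ∈ s, (2*(i:ℝ) - (ν:ℝ) - 2 + 2*(ℓ:ℝ))⁻¹ * ((ν:ℝ) - 2*(ℓ:ℝ) - 2*(i:ℝ) + 2) = -1 := by
      intro ℓ hℓ
      have hx := hne' ℓ i
      rw [show (2*(i:ℝ) - (ν:ℝ) - 2 + 2*(ℓ:ℝ)) = -((ν:ℝ) - 2*(ℓ:ℝ) - 2*(i:ℝ) + 2) from by ring,
        inv_neg, neg_mul, inv_mul_cancel₀ hx]
    rw [Finset.prod_congr rfl f1, Finset.prod_congr rfl f2, Finset.prod_const, Finset.prod_const,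
      ← pow_add]
    have hcards : t.card + s.card = 2*k₁ - 1 := by
      rw [ht, Finset.card_erase_of_mem hi, hs, Nat.card_Icc]; omega
    rw [hcards, Odd.neg_one_pow ⟨k₁ - 1, by omega⟩, neg_neg]
  · rw [if_neg him]
    have hk2 : 2 ≤ k₁ := by omega
    have hms : m ∈ s.erase i := Finset.mem_erase.2 ⟨fun h => him (h.symm), hm⟩
    set t := (s.erase i).erase m with ht
    set p : ℝ[X] := ∏ ℓ ∈ t, (X + C ((ν:ℝ) - 2*(ℓ:ℝ) + 2)) with hp
    have hpnd : p.natDegree = k₁ - 2 := by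
      rw [hp, natDegree_prod_of_monic _ _ fun ℓ _ => monic_X_add_C _]
      simp only [Polynomial.natDegree_X_add_C, Finset.sum_const, smul_eq_mul, mul_one]
      rw [ht, Finset.card_erase_of_mem hms, Finset.card_erase_of_mem hi, hs, Nat.card_Icc]
      omega
    set v : ℕ → ℝ := fun n => -2*(n:ℝ) with hv
    have hvs : Set.InjOn v (s : Set ℕ) := by
      intro x _ y _ hxy
      simp only [hv] at hxy
      have : (x:ℝ) = y := by linarith
      exact_mod_cast this
    have hdeg : p.degree < ((s.card : ℕ) : WithBot ℕ) := by
      have h1 : p.natDegree < s.card := by rw [hpnd, hs, Nat.card_Icc]; omega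
      exact lt_of_le_of_lt p.degree_le_natDegree (by exact_mod_cast h1)
    have dd := dd_lemma hvs hdeg
    have hcoeff : p.coeff (s.card - 1) = 0 := by
      refine Polynomial.coeff_eq_zero_of_natDegree_lt ?_
      rw [hpnd, hs, Nat.card_Icc]; omega
    rw [hcoeff] at dd
    have hterm : ∀ j ∈ s,
        ctil j * ((((ν:ℝ) + 2 - 2*(i:ℝ) - 2*(j:ℝ)) * ((ν:ℝ) + 2 - 2*(j:ℝ) - 2*(m:ℝ)))⁻¹)
          = Polynomial.eval (v j) p * ∏ ℓ ∈ s.erase j, (v j - v ℓ)⁻¹ := by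
      intro j hj
      have hev : Polynomial.eval (v j) p = ∏ ℓ ∈ t, ((ν:ℝ) - 2*(ℓ:ℝ) - 2*(j:ℝ) + 2) := by
        rw [hp, Polynomial.eval_prod]
        refine Finset.prod_congr rfl fun ℓ hℓ => ?_
        simp [hv]; ring
      have hprod : ∏ ℓ ∈ s.erase j, (v j - v ℓ)⁻¹
          = (∏ ℓ ∈ s.erase j, (2*(ℓ:ℝ) - 2*(j:ℝ)))⁻¹ := by
        rw [← Finset.prod_inv_distrib]
        refine Finset.prod_congr rfl fun ℓ hℓ => ?_
        congr 1
        simp [hv]; ring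
      have hnum : (∏ ℓ ∈ s, ((ν : ℝ) - 2 * (ℓ : ℝ) - 2 * (j : ℝ) + 2))
          = ((ν:ℝ) - 2*(i:ℝ) - 2*(j:ℝ) + 2) * (((ν:ℝ) - 2*(m:ℝ) - 2*(j:ℝ) + 2)
              * ∏ ℓ ∈ t, ((ν:ℝ) - 2*(ℓ:ℝ) - 2*(j:ℝ) + 2)) := by
        rw [ht, ← Finset.mul_prod_erase s _ hi, ← Finset.mul_prod_erase (s.erase i) _ hms]
      rw [hctil j, hev, hprod, hnum,
        show (ν:ℝ) + 2 - 2*(i:ℝ) - 2*(j:ℝ) = (ν:ℝ) - 2*(i:ℝ) - 2*(j:ℝ) + 2 from by ring,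
        show (ν:ℝ) + 2 - 2*(j:ℝ) - 2*(m:ℝ) = (ν:ℝ) - 2*(m:ℝ) - 2*(j:ℝ) + 2 from by ring]
      exact cancel_aux (hne' i j) (hne' m j)
    rw [Finset.sum_congr rfl hterm, dd, zero_mul]

open MeasureTheory

theorem projection_formula_L2_component
    (N : ℕ) (hN : 3 ≤ N) (a : ℝ) (ha : 0 < a)
    (β c α : ℝ)
    (hβ : β = Real.sqrt (1 + 4 * a / ((N : ℝ) - 2) ^ 2))
    (hc : c = ((N : ℝ) - 2) * (1 - β) / 2)
    (hα : α = -(((N : ℝ) - 2) * (1 + β)) / 2)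
    (ν : ℕ) (hνodd : Odd ν) (hνpos : 0 < ν) (hνβ : ((N : ℝ) - 2) * β = (ν : ℝ))
    (R : ℝ) (hR : 0 < R)
    (k₁ : ℕ) (hk₁ : k₁ = (ν + 2) / 4)
    (ctil : ℕ → ℝ)
    (hctil : ∀ j : ℕ, ctil j =
      (∏ ℓ ∈ Finset.Icc 1 k₁, ((ν : ℝ) - 2 * (ℓ : ℝ) - 2 * (j : ℝ) + 2)) /
        (∏ ℓ ∈ (Finset.Icc 1 k₁).erase j, (2 * (ℓ : ℝ) - 2 * (j : ℝ))))
    (g : ℝ → ℝ)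
    (hgm : AEStronglyMeasurable g (volume.restrict (Set.Ioi R)))
    (hgL2 : IntegrableOn (fun r => g r ^ 2 * r ^ ((N : ℝ) - 1)) (Set.Ioi R)) :
    (∀ i ∈ Finset.Icc 1 k₁,
      IntegrableOn (fun r => g r * r ^ (c + 2 * (i : ℝ) - 1)) (Set.Ioi R)) ∧
    (⨅ q : ℕ → ℝ, ∫ r in Set.Ioi R,
        (g r - ∑ j ∈ Finset.Icc 1 k₁, q j * r ^ (α + 2 * (j : ℝ) - 2)) ^ 2 *
          r ^ ((N : ℝ) - 1))
      = (∫ r in Set.Ioi R, g r ^ 2 * r ^ ((N : ℝ) - 1))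
        - ∑ i ∈ Finset.Icc 1 k₁, ∑ j ∈ Finset.Icc 1 k₁,
            ctil i * ctil j *
              (R ^ ((ν : ℝ) - 2 * (i : ℝ) - 2 * (j : ℝ) + 2) /
                ((ν : ℝ) - 2 * (i : ℝ) - 2 * (j : ℝ) + 2)) *
              (∫ r in Set.Ioi R, g r * r ^ (c + 2 * (i : ℝ) - 1)) *
              (∫ r in Set.Ioi R, g r * r ^ (c + 2 * (j : ℝ) - 1)) := by
  classical
  have hwν := hνodd
  obtain ⟨wν, hwn⟩ := hwν
  set s : Finset ℕ := Finset.Icc 1 k₁ with hsdef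
  -- basic real identities
  have hc2 : 2 * c = (N : ℝ) - 2 - ν := by
    have h : ((N:ℝ) - 2) * (1 - β) = ((N:ℝ) - 2) - ν := by rw [mul_sub, mul_one, hνβ]
    rw [hc, h]; ring
  have hα2 : 2 * α = -((N : ℝ) - 2) - ν := by
    have h : ((N:ℝ) - 2) * (1 + β) = ((N:ℝ) - 2) + ν := by rw [mul_add, mul_one, hνβ]
    rw [hα, h]; ring
  have hcα : c = α + ((N:ℝ) - 2) := by linarith
  have hk4 : 4 * k₁ ≤ ν + 1 := by omega
  have hmem : ∀ j ∈ s, 1 ≤ j ∧ j ≤ k₁ := fun j hj => Finset.mem_Icc.1 hj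
  have hjk : ∀ j ∈ s, (j : ℝ) ≤ k₁ := by
    intro j hj; exact_mod_cast (hmem j hj).2
  have hkν : (4 * k₁ : ℝ) ≤ (ν : ℝ) + 1 := by exact_mod_cast hk4
  -- measurability of powers
  have hrm : ∀ p : ℝ, AEStronglyMeasurable (fun r : ℝ => r ^ p) (volume.restrict (Set.Ioi R)) :=
    fun p => (by fun_prop : Measurable fun r : ℝ => r ^ p).aestronglyMeasurable
  -- integrability of pure powers
  have hpow : ∀ p : ℝ, p < -1 → IntegrableOn (fun r : ℝ => r ^ p) (Set.Ioi R) :=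
    fun p hp => integrableOn_Ioi_rpow_of_lt hp hR
  -- b-integrability (first conjunct)
  have hb : ∀ i ∈ s, IntegrableOn (fun r => g r * r ^ (c + 2 * (i : ℝ) - 1)) (Set.Ioi R) := by
    intro i hi
    have hexp : 2 * (c + 2 * (i:ℝ) - 1) - ((N:ℝ) - 1) < -1 := by
      have := hjk i hi; linarith
    have hint : IntegrableOn
        (fun r => (g r ^ 2 * r ^ ((N:ℝ)-1) + r ^ (2 * (c + 2*(i:ℝ) - 1) - ((N:ℝ)-1))) / 2)
        (Set.Ioi R) := (hgL2.add (hpow _ hexp)).div_const 2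
    refine Integrable.mono' hint (hgm.mul (hrm _)) ?_
    rw [MeasureTheory.ae_restrict_iff' measurableSet_Ioi]
    refine Filter.Eventually.of_forall ?_
    intro r hr
    have hr0 : 0 < r := hR.trans hr
    set q : ℝ := c + 2*(i:ℝ) - 1 with hqdef
    have h1 : r ^ q = r ^ (((N:ℝ)-1)/2) * r ^ (q - ((N:ℝ)-1)/2) := by
      rw [← Real.rpow_add hr0]; ring_nf
    have hA : (r ^ (((N:ℝ)-1)/2)) ^ 2 = r ^ ((N:ℝ)-1) := by
      rw [← Real.rpow_natCast (r ^ (((N:ℝ)-1)/2)) 2, ← Real.rpow_mul hr0.le]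
      norm_num
    have hB : (r ^ (q - ((N:ℝ)-1)/2)) ^ 2 = r ^ (2*q - ((N:ℝ)-1)) := by
      rw [← Real.rpow_natCast _ 2, ← Real.rpow_mul hr0.le]
      congr 1; ring
    have hXA : |g r| * r ^ (((N:ℝ)-1)/2) ≥ 0 :=
      mul_nonneg (abs_nonneg _) (Real.rpow_nonneg hr0.le _)
    have key : 2 * ((|g r| * r ^ (((N:ℝ)-1)/2)) * r ^ (q - ((N:ℝ)-1)/2))
        ≤ (|g r| * r ^ (((N:ℝ)-1)/2))^2 + (r ^ (q - ((N:ℝ)-1)/2))^2 := by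
      have := two_mul_le_add_sq (|g r| * r ^ (((N:ℝ)-1)/2)) (r ^ (q - ((N:ℝ)-1)/2))
      linarith
    have hnorm : ‖g r * r ^ q‖ = |g r| * (r ^ (((N:ℝ)-1)/2) * r ^ (q - ((N:ℝ)-1)/2)) := by
      rw [Real.norm_eq_abs, abs_mul, h1, abs_of_nonneg (mul_nonneg (Real.rpow_nonneg hr0.le _)
        (Real.rpow_nonneg hr0.le _))]
    rw [hnorm]
    have hsq : (|g r| * r ^ (((N:ℝ)-1)/2))^2 = g r ^ 2 * r ^ ((N:ℝ)-1) := by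
      rw [mul_pow, sq_abs, hA]
    have hB2 := hB
    calc |g r| * (r ^ (((N:ℝ)-1)/2) * r ^ (q - ((N:ℝ)-1)/2))
        ≤ ((|g r| * r ^ (((N:ℝ)-1)/2))^2 + (r ^ (q - ((N:ℝ)-1)/2))^2) / 2 := by linarith
      _ = (g r ^ 2 * r ^ ((N:ℝ)-1) + r ^ (2*q - ((N:ℝ)-1))) / 2 := by rw [hsq, hB2]
  refine ⟨hb, ?_⟩
  -- integrability of products of powers
  have heint : ∀ i ∈ s, ∀ j ∈ s, IntegrableOn
      (fun r => r ^ (α + 2*(i:ℝ) - 2) * r ^ (α + 2*(j:ℝ) - 2) * r ^ ((N:ℝ)-1)) (Set.Ioi R) := by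
    intro i hi j hj
    have hlt : (2*(i:ℝ) + 2*(j:ℝ)) - (ν:ℝ) - 3 < -1 := by
      have h1 := hjk i hi; have h2 := hjk j hj; linarith
    refine (hpow _ hlt).congr_fun ?_ measurableSet_Ioi
    intro r hr
    have hr0 : 0 < r := hR.trans hr
    dsimp only
    symm
    rw [← Real.rpow_add hr0, ← Real.rpow_add hr0]
    congr 1
    linarith
  -- pointwise identity e_i e_j w and g e_j w
  have heeq : ∀ j : ℕ, Set.EqOn (fun r => g r * r ^ (c + 2*(j:ℝ) - 1))
      (fun r => g r * r ^ (α + 2*(j:ℝ) - 2) * r ^ ((N:ℝ)-1)) (Set.Ioi R) := by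
    intro j r hr
    have hr0 : 0 < r := hR.trans hr
    simp only
    rw [mul_assoc, ← Real.rpow_add hr0]
    congr 2
    linarith
  have hge : ∀ j ∈ s, IntegrableOn
      (fun r => g r * r ^ (α + 2*(j:ℝ) - 2) * r ^ ((N:ℝ)-1)) (Set.Ioi R) :=
    fun j hj => (hb j hj).congr_fun (heeq j) measurableSet_Ioi
  have hgeI : ∀ j ∈ s, (∫ r in Set.Ioi R, g r * r ^ (α + 2*(j:ℝ) - 2) * r ^ ((N:ℝ)-1))
      = ∫ r in Set.Ioi R, g r * r ^ (c + 2*(j:ℝ) - 1) :=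
    fun j hj => (setIntegral_congr_fun measurableSet_Ioi (heeq j)).symm
  -- Gram matrix values
  have hne2 : ∀ x y : ℕ, ((ν:ℝ) + 2 - 2*(x:ℝ) - 2*(y:ℝ)) ≠ 0 := by
    intro x y h
    have : (ν:ℤ) + 2 - 2*(x:ℤ) - 2*(y:ℤ) = 0 := by exact_mod_cast h
    omega
  have hG : ∀ i ∈ s, ∀ j ∈ s,
      (∫ r in Set.Ioi R, r ^ (α + 2*(i:ℝ) - 2) * r ^ (α + 2*(j:ℝ) - 2) * r ^ ((N:ℝ)-1))
        = R ^ (2*(i:ℝ) + 2*(j:ℝ) - (ν:ℝ) - 2) / ((ν:ℝ) + 2 - 2*(i:ℝ) - 2*(j:ℝ)) := by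
    intro i hi j hj
    have hlt : (2*(i:ℝ) + 2*(j:ℝ)) - (ν:ℝ) - 3 < -1 := by
      have h1 := hjk i hi; have h2 := hjk j hj; linarith
    have h1 : (∫ r in Set.Ioi R, r ^ (α + 2*(i:ℝ) - 2) * r ^ (α + 2*(j:ℝ) - 2) * r ^ ((N:ℝ)-1))
        = ∫ r in Set.Ioi R, r ^ ((2*(i:ℝ) + 2*(j:ℝ)) - (ν:ℝ) - 3) := by
      refine setIntegral_congr_fun measurableSet_Ioi ?_
      intro r hr
      have hr0 : 0 < r := hR.trans hr
      simp only
      rw [← Real.rpow_add hr0, ← Real.rpow_add hr0]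
      congr 1
      linarith
    rw [h1, integral_Ioi_rpow_of_lt hlt hR,
      show ((ν:ℝ) + 2 - 2*(i:ℝ) - 2*(j:ℝ)) = -((2*(i:ℝ) + 2*(j:ℝ)) - (ν:ℝ) - 3 + 1) from by ring,
      div_neg, neg_div,
      show (2*(i:ℝ) + 2*(j:ℝ)) - (ν:ℝ) - 3 + 1 = 2*(i:ℝ) + 2*(j:ℝ) - (ν:ℝ) - 2 from by ring]
  -- define abbreviations
  set bI : ℕ → ℝ := fun i => ∫ r in Set.Ioi R, g r * r ^ (c + 2 * (i:ℝ) - 1) with hbI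
  set Gm : ℕ → ℕ → ℝ := fun i j =>
    R ^ (2*(i:ℝ) + 2*(j:ℝ) - (ν:ℝ) - 2) / ((ν:ℝ) + 2 - 2*(i:ℝ) - 2*(j:ℝ)) with hGm
  set Mm : ℕ → ℕ → ℝ := fun i j => ctil i * ctil j *
    (R ^ ((ν:ℝ) - 2*(i:ℝ) - 2*(j:ℝ) + 2) / ((ν:ℝ) - 2*(i:ℝ) - 2*(j:ℝ) + 2)) with hMm
  set qs : ℕ → ℝ := fun j => ∑ m ∈ s, Mm j m * bI m with hqs
  -- inverse property
  have hGM : ∀ i ∈ s, ∀ m ∈ s, (∑ j ∈ s, Gm i j * Mm j m) = if i = m then 1 else 0 := by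
    intro i hi m hm
    have hcs := cauchy_sum ν k₁ hνodd ctil hctil hi hm
    rw [← hsdef] at hcs
    have hterm : ∀ j ∈ s, Gm i j * Mm j m
        = ctil j * ((((ν:ℝ) + 2 - 2*(i:ℝ) - 2*(j:ℝ)) * ((ν:ℝ) + 2 - 2*(j:ℝ) - 2*(m:ℝ)))⁻¹)
            * ctil m * R ^ (2*(i:ℝ) - 2*(m:ℝ)) := by
      intro j hj
      have hRc : R ^ (2*(i:ℝ) + 2*(j:ℝ) - (ν:ℝ) - 2) * R ^ ((ν:ℝ) + 2 - 2*(j:ℝ) - 2*(m:ℝ))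
          = R ^ (2*(i:ℝ) - 2*(m:ℝ)) := by
        rw [← Real.rpow_add hR]; congr 1; ring
      simp only [hGm, hMm]
      rw [show ((ν:ℝ) - 2*(j:ℝ) - 2*(m:ℝ) + 2) = (ν:ℝ) + 2 - 2*(j:ℝ) - 2*(m:ℝ) from by ring,
        mul_inv, div_eq_mul_inv, div_eq_mul_inv, ← hRc]
      ring
    rw [Finset.sum_congr rfl hterm, ← Finset.sum_mul, ← Finset.sum_mul, hcs]
    by_cases him : i = m
    · subst him
      simp [show 2*(i:ℝ) - 2*(i:ℝ) = 0 from by ring]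
    · simp [him]
  have hGqs : ∀ i ∈ s, (∑ j ∈ s, Gm i j * qs j) = bI i := by
    intro i hi
    have h1 : ∀ j ∈ s, Gm i j * qs j = ∑ m ∈ s, Gm i j * Mm j m * bI m := by
      intro j hj
      simp only [hqs]
      rw [Finset.mul_sum]
      exact Finset.sum_congr rfl fun m _ => by ring
    rw [Finset.sum_congr rfl h1, Finset.sum_comm]
    have h2 : ∀ m ∈ s, (∑ j ∈ s, Gm i j * Mm j m * bI m) = (if i = m then 1 else 0) * bI m := by
      intro m hm
      rw [← Finset.sum_mul, hGM i hi m hm]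
    rw [Finset.sum_congr rfl h2]
    simp only [ite_mul, one_mul, zero_mul]
    rw [Finset.sum_ite_eq]
    exact if_pos hi
  -- pointwise square expansion
  have hsq : ∀ (p : ℕ → ℝ) (r : ℝ),
      (∑ i ∈ s, ∑ j ∈ s, (p i * p j) *
          (r ^ (α + 2*(i:ℝ) - 2) * r ^ (α + 2*(j:ℝ) - 2) * r ^ ((N:ℝ)-1)))
        = (∑ j ∈ s, p j * r ^ (α + 2*(j:ℝ) - 2))^2 * r ^ ((N:ℝ)-1) := by
    intro p r
    rw [sq, Finset.sum_mul_sum, Finset.sum_mul]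
    refine Finset.sum_congr rfl fun i _ => ?_
    rw [Finset.sum_mul]
    exact Finset.sum_congr rfl fun j _ => by ring
  -- integral of double sum
  have hdsum : ∀ p : ℕ → ℝ,
      (∫ r in Set.Ioi R, ∑ i ∈ s, ∑ j ∈ s, (p i * p j) *
          (r ^ (α + 2*(i:ℝ) - 2) * r ^ (α + 2*(j:ℝ) - 2) * r ^ ((N:ℝ)-1)))
        = ∑ i ∈ s, ∑ j ∈ s, (p i * p j) * Gm i j := by
    intro p
    rw [MeasureTheory.integral_finset_sum _
      (fun i hi => integrable_finset_sum _ fun j hj => (heint i hi j hj).const_mul _)]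
    refine Finset.sum_congr rfl fun i hi => ?_
    rw [MeasureTheory.integral_finset_sum _ (fun j hj => (heint i hi j hj).const_mul _)]
    refine Finset.sum_congr rfl fun j hj => ?_
    rw [MeasureTheory.integral_const_mul, hG i hi j hj]
  -- the quadratic expansion of the objective
  have hQ : ∀ q : ℕ → ℝ,
      (∫ r in Set.Ioi R,
          (g r - ∑ j ∈ s, q j * r ^ (α + 2 * (j:ℝ) - 2)) ^ 2 * r ^ ((N:ℝ) - 1))
        = (∫ r in Set.Ioi R, g r ^ 2 * r ^ ((N:ℝ) - 1))
          - (∑ j ∈ s, (2 * q j) * bI j)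
          + ∑ i ∈ s, ∑ j ∈ s, (q i * q j) * Gm i j := by
    intro q
    have hpt : ∀ r : ℝ,
        (g r - ∑ j ∈ s, q j * r ^ (α + 2 * (j:ℝ) - 2)) ^ 2 * r ^ ((N:ℝ) - 1)
          = g r ^ 2 * r ^ ((N:ℝ)-1)
            - (∑ j ∈ s, (2 * q j) * (g r * r ^ (α + 2*(j:ℝ) - 2) * r ^ ((N:ℝ)-1)))
            + ∑ i ∈ s, ∑ j ∈ s, (q i * q j) *
                (r ^ (α + 2*(i:ℝ) - 2) * r ^ (α + 2*(j:ℝ) - 2) * r ^ ((N:ℝ)-1)) := by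
      intro r
      have h2 : (∑ j ∈ s, (2 * q j) * (g r * r ^ (α + 2*(j:ℝ) - 2) * r ^ ((N:ℝ)-1)))
          = 2 * (∑ j ∈ s, q j * r ^ (α + 2*(j:ℝ) - 2)) * (g r * r ^ ((N:ℝ)-1)) := by
        calc (∑ j ∈ s, (2 * q j) * (g r * r ^ (α + 2*(j:ℝ) - 2) * r ^ ((N:ℝ)-1)))
            = ∑ j ∈ s, (q j * r ^ (α + 2*(j:ℝ) - 2)) * (2 * (g r * r ^ ((N:ℝ)-1))) :=
              Finset.sum_congr rfl fun j _ => by ring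
          _ = (∑ j ∈ s, q j * r ^ (α + 2*(j:ℝ) - 2)) * (2 * (g r * r ^ ((N:ℝ)-1))) := by
              rw [← Finset.sum_mul]
          _ = 2 * (∑ j ∈ s, q j * r ^ (α + 2*(j:ℝ) - 2)) * (g r * r ^ ((N:ℝ)-1)) := by ring
      rw [h2, hsq q r]
      ring
    simp only [hpt]
    have hT2 : Integrable (fun r => ∑ j ∈ s, (2 * q j) *
        (g r * r ^ (α + 2*(j:ℝ) - 2) * r ^ ((N:ℝ)-1))) (volume.restrict (Set.Ioi R)) :=
      integrable_finset_sum _ fun j hj => (hge j hj).const_mul _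
    have hT3 : Integrable (fun r => ∑ i ∈ s, ∑ j ∈ s, (q i * q j) *
        (r ^ (α + 2*(i:ℝ) - 2) * r ^ (α + 2*(j:ℝ) - 2) * r ^ ((N:ℝ)-1)))
        (volume.restrict (Set.Ioi R)) :=
      integrable_finset_sum _ fun i hi => integrable_finset_sum _ fun j hj =>
        (heint i hi j hj).const_mul _
    have hT12 : Integrable (fun r => g r ^ 2 * r ^ ((N:ℝ)-1)
        - ∑ j ∈ s, (2 * q j) * (g r * r ^ (α + 2*(j:ℝ) - 2) * r ^ ((N:ℝ)-1)))
        (volume.restrict (Set.Ioi R)) := hgL2.sub hT2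
    rw [MeasureTheory.integral_add hT12 hT3, MeasureTheory.integral_sub hgL2 hT2,
      MeasureTheory.integral_finset_sum _ (fun j hj => (hge j hj).const_mul _), hdsum q]
    congr 2
    refine Finset.sum_congr rfl fun j hj => ?_
    rw [MeasureTheory.integral_const_mul, hgeI j hj]
  -- positive semidefiniteness
  have hPSD : ∀ p : ℕ → ℝ, 0 ≤ ∑ i ∈ s, ∑ j ∈ s, (p i * p j) * Gm i j := by
    intro p
    rw [← hdsum p]
    simp only [hsq p]
    refine MeasureTheory.setIntegral_nonneg measurableSet_Ioi fun r hr => ?_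
    exact mul_nonneg (sq_nonneg _) (Real.rpow_nonneg (le_of_lt (hR.trans hr)) _)
  have hGsym : ∀ i j : ℕ, Gm i j = Gm j i := by
    intro i j
    simp only [hGm]
    rw [show 2*(i:ℝ)+2*(j:ℝ)-(ν:ℝ)-2 = 2*(j:ℝ)+2*(i:ℝ)-(ν:ℝ)-2 from by ring,
      show (ν:ℝ)+2-2*(i:ℝ)-2*(j:ℝ) = (ν:ℝ)+2-2*(j:ℝ)-2*(i:ℝ) from by ring]
  have huv : ∀ u : ℕ → ℝ,
      (∑ i ∈ s, ∑ j ∈ s, (u i * qs j) * Gm i j) = ∑ i ∈ s, u i * bI i := by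
    intro u
    refine Finset.sum_congr rfl fun i hi => ?_
    calc (∑ j ∈ s, (u i * qs j) * Gm i j) = ∑ j ∈ s, u i * (Gm i j * qs j) :=
          Finset.sum_congr rfl fun j _ => by ring
      _ = u i * ∑ j ∈ s, Gm i j * qs j := by rw [Finset.mul_sum]
      _ = u i * bI i := by rw [hGqs i hi]
  have hvu : ∀ u : ℕ → ℝ,
      (∑ i ∈ s, ∑ j ∈ s, (qs i * u j) * Gm i j) = ∑ i ∈ s, u i * bI i := by
    intro u
    calc (∑ i ∈ s, ∑ j ∈ s, (qs i * u j) * Gm i j)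
        = ∑ j ∈ s, ∑ i ∈ s, (qs i * u j) * Gm i j := Finset.sum_comm
      _ = ∑ j ∈ s, ∑ i ∈ s, (u j * qs i) * Gm j i := by
          refine Finset.sum_congr rfl fun j _ => Finset.sum_congr rfl fun i _ => ?_
          rw [hGsym i j]; ring
      _ = ∑ i ∈ s, u i * bI i := huv u
  -- value at the minimizer
  have hEqs : (∫ r in Set.Ioi R,
        (g r - ∑ j ∈ s, qs j * r ^ (α + 2 * (j:ℝ) - 2)) ^ 2 * r ^ ((N:ℝ) - 1))
      = (∫ r in Set.Ioi R, g r ^ 2 * r ^ ((N:ℝ) - 1)) - ∑ i ∈ s, qs i * bI i := by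
    rw [hQ qs]
    have h1 : (∑ j ∈ s, (2 * qs j) * bI j) = 2 * ∑ j ∈ s, qs j * bI j := by
      rw [Finset.mul_sum]
      exact Finset.sum_congr rfl fun j _ => by ring
    rw [h1, huv qs]
    ring
  -- lower bound
  have hlow : ∀ q : ℕ → ℝ,
      ((∫ r in Set.Ioi R, g r ^ 2 * r ^ ((N:ℝ) - 1)) - ∑ i ∈ s, qs i * bI i)
        ≤ ∫ r in Set.Ioi R,
            (g r - ∑ j ∈ s, q j * r ^ (α + 2 * (j:ℝ) - 2)) ^ 2 * r ^ ((N:ℝ) - 1) := by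
    intro q
    rw [hQ q]
    have hpsd := hPSD (fun n => q n - qs n)
    have hdiff : (∑ i ∈ s, ∑ j ∈ s, ((q i - qs i) * (q j - qs j)) * Gm i j)
        = (∑ i ∈ s, ∑ j ∈ s, (q i * q j) * Gm i j)
          - (∑ i ∈ s, q i * bI i) - (∑ i ∈ s, q i * bI i) + ∑ i ∈ s, qs i * bI i := by
      have hexp : ∀ i ∈ s, ∀ j ∈ s, ((q i - qs i) * (q j - qs j)) * Gm i j
          = (q i * q j) * Gm i j - (q i * qs j) * Gm i j
            - (qs i * q j) * Gm i j + (qs i * qs j) * Gm i j := fun i _ j _ => by ring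
      rw [Finset.sum_congr rfl (fun i hi => Finset.sum_congr rfl (hexp i hi))]
      simp only [Finset.sum_add_distrib, Finset.sum_sub_distrib]
      rw [huv q, hvu q, huv qs]
    have h1 : (∑ j ∈ s, (2 * q j) * bI j) = 2 * ∑ j ∈ s, q j * bI j := by
      rw [Finset.mul_sum]
      exact Finset.sum_congr rfl fun j _ => by ring
    rw [h1]
    linarith [hdiff, hpsd]
  -- conclude the infimum computation
  have hbdd : BddBelow (Set.range (fun q : ℕ → ℝ => ∫ r in Set.Ioi R,
      (g r - ∑ j ∈ s, q j * r ^ (α + 2 * (j:ℝ) - 2)) ^ 2 * r ^ ((N:ℝ) - 1))) := by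
    refine ⟨(∫ r in Set.Ioi R, g r ^ 2 * r ^ ((N:ℝ) - 1)) - ∑ i ∈ s, qs i * bI i, ?_⟩
    rintro x ⟨q, rfl⟩
    exact hlow q
  have hinf : (⨅ q : ℕ → ℝ, ∫ r in Set.Ioi R,
      (g r - ∑ j ∈ s, q j * r ^ (α + 2 * (j:ℝ) - 2)) ^ 2 * r ^ ((N:ℝ) - 1))
      = (∫ r in Set.Ioi R, g r ^ 2 * r ^ ((N:ℝ) - 1)) - ∑ i ∈ s, qs i * bI i := by
    refine le_antisymm ?_ (le_ciInf hlow)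
    calc (⨅ q : ℕ → ℝ, ∫ r in Set.Ioi R,
          (g r - ∑ j ∈ s, q j * r ^ (α + 2 * (j:ℝ) - 2)) ^ 2 * r ^ ((N:ℝ) - 1))
        ≤ ∫ r in Set.Ioi R,
            (g r - ∑ j ∈ s, qs j * r ^ (α + 2 * (j:ℝ) - 2)) ^ 2 * r ^ ((N:ℝ) - 1) :=
          ciInf_le hbdd qs
      _ = _ := hEqs
  rw [hinf]
  congr 1
  refine Finset.sum_congr rfl fun i hi => ?_
  simp only [hqs]
  rw [Finset.sum_mul]
  refine Finset.sum_congr rfl fun j hj => ?_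
  simp only [hMm, hbI]
  ring
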